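/- Let α be a unital twisted partial action of a group G on a unital ring R and H a subgroup of G. If the partial crossed product R*_{α,w}G is right artinian, then R*_{α_H,w_H}H is right artinian. -/

import Mathlib

/-- A unital twisted partial action of a group `G` on a unital ring `R`
(Dokuchaev–Exel–Simón).  The ideal `D g` is the ideal generated by the central
idempotent `e g`, i.e. `D g = {x | e g * x = x}`;  `act g` is the isomorphism
`α_g : D g⁻¹ → D g` (its values outside `D g⁻¹` are irrelevant) with inverse
`inv g`, and `w g h` is the invertible twisting element of `D g * D (g*h)`
with inverse `winv g h`. -/
structure UnitalTwistedPartialAction (G : Type) [Group G] (R : Type) [Ring R] where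
  e : G → R
  idem : ∀ g, e g * e g = e g
  central : ∀ g r, e g * r = r * e g
  e_one : e 1 = 1
  act : G → R → R
  inv : G → R → R
  w : G → G → R
  winv : G → G → R
  act_mem : ∀ g x, e g⁻¹ * x = x → e g * act g x = act g x
  act_add : ∀ g x y, e g⁻¹ * x = x → e g⁻¹ * y = y →
    act g (x + y) = act g x + act g y
  act_mul : ∀ g x y, e g⁻¹ * x = x → e g⁻¹ * y = y →
    act g (x * y) = act g x * act g y
  inv_act : ∀ g x, e g⁻¹ * x = x → inv g (act g x) = x
  act_inv : ∀ g x, e g * x = x → act g (inv g x) = x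
  act_one : ∀ x, act 1 x = x
  -- α_g(D_{g⁻¹} D_h) = D_g D_{gh}
  act_range : ∀ g h x, e g⁻¹ * x = x → e h * x = x → e (g * h) * act g x = act g x
  act_range' : ∀ g h y, e g * y = y → e (g * h) * y = y →
    ∃ x, e g⁻¹ * x = x ∧ e h * x = x ∧ act g x = y
  w_mem : ∀ g h, e g * w g h = w g h ∧ e (g * h) * w g h = w g h
  w_winv : ∀ g h, w g h * winv g h = e g * e (g * h)
  winv_w : ∀ g h, winv g h * w g h = e g * e (g * h)
  w_one_left : ∀ g, w 1 g = e g
  w_one_right : ∀ g, w g 1 = e g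
  -- α_g ∘ α_h (a) = w_{g,h} α_{gh}(a) w_{g,h}⁻¹  for a ∈ D_{h⁻¹} D_{(gh)⁻¹}
  comp : ∀ g h a, e h⁻¹ * a = a → e (h⁻¹ * g⁻¹) * a = a →
    act g (act h a) = w g h * act (g * h) a * winv g h
  -- the cocycle identity α_g(a w_{h,t}) w_{g,ht} = α_g(a) w_{g,h} w_{gh,t}
  cocycle : ∀ g h t a, e g⁻¹ * a = a → e h * a = a → e (h * t) * a = a →
    act g (a * w h t) * w g (h * t) = act g a * w g h * w (g * h) t

/-- A realization of the partial crossed product `R *_{α,w} G`:  a ring `A`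
together with maps `δ g : D g → A` (written as maps `R → A` that only depend
on the `D g`-component) such that `A = ⊕_{g ∈ G} δ g (D g)` with the crossed
product multiplication `(a δ_g)(b δ_h) = α_g(α_g⁻¹(a) b) w_{g,h} δ_{gh}`. -/
structure IsCrossedProduct {G R : Type} [Group G] [Ring R]
    (pa : UnitalTwistedPartialAction G R) (A : Type) [Ring A]
    (δ : G → R → A) : Prop where
  proj : ∀ g a, δ g a = δ g (pa.e g * a)
  add : ∀ g a b, δ g (a + b) = δ g a + δ g b
  mul : ∀ g h a b, pa.e g * a = a → pa.e h * b = b →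
    δ g a * δ h b = δ (g * h) (pa.act g (pa.inv g a * b) * pa.w g h)
  one : δ 1 1 = 1
  indep : ∀ (s : Finset G) (a : G → R), (∀ g, pa.e g * a g = a g) →
    (∑ g ∈ s, δ g (a g)) = 0 → ∀ g ∈ s, a g = 0
  span : ∀ x : A, ∃ (s : Finset G) (a : G → R),
    (∀ g, pa.e g * a g = a g) ∧ x = ∑ g ∈ s, δ g (a g)

/-- A ring is semilocal if it is semisimple modulo its Jacobson radical. -/
def IsSemilocalRing (A : Type) [Ring A] : Prop :=
  IsSemisimpleRing (TwoSidedIdeal.jacobson (⊥ : TwoSidedIdeal A)).ringCon.Quotient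

/-- A ring is semiprimary if it is semilocal and its Jacobson radical is nilpotent. -/
def IsSemiprimaryRing' (A : Type) [Ring A] : Prop :=
  IsSemilocalRing A ∧ ∃ n : ℕ, 0 < n ∧ ∀ f : Fin n → A,
    (∀ i, f i ∈ TwoSidedIdeal.jacobson (⊥ : TwoSidedIdeal A)) →
      (List.ofFn f).prod = 0

/-- A ring is right artinian iff its opposite ring is (left) artinian. -/
def IsRightArtinianRing (A : Type) [Ring A] : Prop := IsArtinianRing Aᵐᵒᵖ

/-- A ring is right noetherian iff its opposite ring is (left) noetherian. -/
def IsRightNoetherianRing (A : Type) [Ring A] : Prop := IsNoetherianRing Aᵐᵒᵖ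

namespace CrossedAux

open scoped Classical

variable {G R : Type} [Group G] [Ring R] {pa : UnitalTwistedPartialAction G R}
  {A : Type} [Ring A] {δ : G → R → A} (hcp : IsCrossedProduct pa A δ) (H : Subgroup G)

include hcp

lemma delta_zero (g : G) : δ g 0 = (0 : A) := by
  have h := hcp.add g 0 0
  rw [add_zero] at h
  exact (left_eq_add.mp h)

lemma delta_sub (g : G) (a b : R) : δ g (a - b) = δ g a - δ g b := by
  have h := hcp.add g (a - b) b
  rw [sub_add_cancel] at h
  exact eq_sub_of_add_eq h.symm

lemma delta_neg (g : G) (a : R) : δ g (-a) = - δ g a := by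
  have h := delta_sub hcp g 0 a
  rw [zero_sub, delta_zero hcp] at h
  rw [h, zero_sub]

/-- uniqueness of coefficients -/
lemma coeff_unique (s t : Finset G) (a b : G → R)
    (ha : ∀ g, pa.e g * a g = a g) (hb : ∀ g, pa.e g * b g = b g)
    (h : (∑ g ∈ s, δ g (a g)) = ∑ g ∈ t, δ g (b g)) :
    ∀ g, (if g ∈ s then a g else 0) = (if g ∈ t then b g else 0) := by
  set c : G → R := fun g => (if g ∈ s then a g else 0) - (if g ∈ t then b g else 0) with hc
  have hce : ∀ g, pa.e g * c g = c g := by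
    intro g
    simp only [hc, mul_sub]
    congr 1 <;> split <;> simp [ha, hb]
  have hsum : (∑ g ∈ s ∪ t, δ g (c g)) = 0 := by
    have h1 : ∀ (u : Finset G) (d : G → R), (∑ g ∈ s ∪ t, δ g (if g ∈ u then d g else 0))
        = ∑ g ∈ (s ∪ t).filter (· ∈ u), δ g (d g) := by
      intro u d
      rw [Finset.sum_filter]
      refine Finset.sum_congr rfl fun g _ => ?_
      split <;> simp [delta_zero hcp]
    have h2 : (s ∪ t).filter (· ∈ s) = s := by
      ext g; simp only [Finset.mem_filter, Finset.mem_union]; tauto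
    have h3 : (s ∪ t).filter (· ∈ t) = t := by
      ext g; simp only [Finset.mem_filter, Finset.mem_union]; tauto
    calc (∑ g ∈ s ∪ t, δ g (c g))
        = (∑ g ∈ s ∪ t, δ g (if g ∈ s then a g else 0))
          - ∑ g ∈ s ∪ t, δ g (if g ∈ t then b g else 0) := by
          rw [← Finset.sum_sub_distrib]
          exact Finset.sum_congr rfl fun g _ => delta_sub hcp g _ _
      _ = 0 := by rw [h1 s a, h1 t b, h2, h3, h, sub_self]
  intro g
  by_cases hg : g ∈ s ∪ t
  · have := hcp.indep (s ∪ t) c hce hsum g hg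
    exact sub_eq_zero.mp this
  · simp only [Finset.mem_union, not_or] at hg
    simp [hg.1, hg.2]

lemma sum_ite_filter (p : G → Prop) [DecidablePred p] (u s : Finset G) (hsub : s ⊆ u)
    (a : G → R) : (∑ g ∈ u.filter p, δ g (if g ∈ s then a g else 0))
      = ∑ g ∈ s.filter p, δ g (a g) := by
  have h1 : (∑ g ∈ (u.filter p).filter (· ∈ s), δ g (a g))
      = ∑ g ∈ u.filter p, δ g (if g ∈ s then a g else 0) := by
    rw [Finset.sum_filter]
    refine Finset.sum_congr rfl fun g _ => ?_
    split <;> simp [delta_zero hcp]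
  have h2 : (u.filter p).filter (· ∈ s) = s.filter p := by
    ext g
    simp only [Finset.mem_filter]
    exact ⟨fun ⟨⟨_, hp⟩, hs⟩ => ⟨hs, hp⟩, fun ⟨hs, hp⟩ => ⟨⟨hsub hs, hp⟩, hs⟩⟩
  rw [← h1, h2]

open Classical in
/-- the projection onto the `H`-supported part -/
noncomputable def projH (x : A) : A :=
  ∑ g ∈ (hcp.span x).choose.filter (· ∈ H), δ g ((hcp.span x).choose_spec.choose g)

open Classical in
lemma projH_eq (x : A) (s : Finset G) (a : G → R) (ha : ∀ g, pa.e g * a g = a g)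
    (hx : x = ∑ g ∈ s, δ g (a g)) :
    projH hcp H x = ∑ g ∈ s.filter (· ∈ H), δ g (a g) := by
  set s₀ := (hcp.span x).choose
  set a₀ := (hcp.span x).choose_spec.choose
  obtain ⟨ha₀, hx₀⟩ := (hcp.span x).choose_spec.choose_spec
  have key := coeff_unique hcp s₀ s a₀ a ha₀ ha (hx₀.symm.trans hx)
  have e1 : projH hcp H x = ∑ g ∈ (s₀ ∪ s).filter (· ∈ H), δ g (if g ∈ s₀ then a₀ g else 0) :=
    (sum_ite_filter hcp (· ∈ H) (s₀ ∪ s) s₀ Finset.subset_union_left a₀).symm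
  have e2 : (∑ g ∈ (s₀ ∪ s).filter (· ∈ H), δ g (if g ∈ s then a g else 0))
      = ∑ g ∈ s.filter (· ∈ H), δ g (a g) :=
    sum_ite_filter hcp (· ∈ H) (s₀ ∪ s) s Finset.subset_union_right a
  rw [e1, ← e2]
  exact Finset.sum_congr rfl fun g _ => by rw [key g]

lemma projH_zero : projH hcp H 0 = 0 := by
  rw [projH_eq hcp H 0 ∅ 0 (fun g => by simp) (by simp)]
  simp

lemma projH_add (x y : A) : projH hcp H (x + y) = projH hcp H x + projH hcp H y := by
  classical
  obtain ⟨s, a, ha, hx⟩ := hcp.span x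
  obtain ⟨t, b, hb, hy⟩ := hcp.span y
  set c : G → R := fun g => (if g ∈ s then a g else 0) + (if g ∈ t then b g else 0) with hc
  have hce : ∀ g, pa.e g * c g = c g := by
    intro g; simp only [hc, mul_add]; congr 1 <;> split <;> simp [ha, hb]
  have hsum : ∀ (p : G → Prop) [DecidablePred p] (u : Finset G), s ⊆ u → t ⊆ u →
      (∑ g ∈ u.filter p, δ g (c g))
        = (∑ g ∈ s.filter p, δ g (a g)) + ∑ g ∈ t.filter p, δ g (b g) := by
    intro p _ u hsu htu
    calc (∑ g ∈ u.filter p, δ g (c g))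
        = (∑ g ∈ u.filter p, δ g (if g ∈ s then a g else 0))
          + ∑ g ∈ u.filter p, δ g (if g ∈ t then b g else 0) := by
          rw [← Finset.sum_add_distrib]
          exact Finset.sum_congr rfl fun g _ => hcp.add g _ _
      _ = _ := by rw [sum_ite_filter hcp p u s hsu a, sum_ite_filter hcp p u t htu b]
  have hxy : x + y = ∑ g ∈ s ∪ t, δ g (c g) := by
    have := hsum (fun _ => True) (s ∪ t) Finset.subset_union_left Finset.subset_union_right
    simpa [Finset.filter_true_of_mem, hx, hy] using this.symm
  rw [projH_eq hcp H (x + y) (s ∪ t) c hce hxy,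
    hsum (· ∈ H) (s ∪ t) Finset.subset_union_left Finset.subset_union_right,
    projH_eq hcp H x s a ha hx, projH_eq hcp H y t b hb hy]

lemma projH_sum {ι : Type*} (s : Finset ι) (f : ι → A) :
    projH hcp H (∑ i ∈ s, f i) = ∑ i ∈ s, projH hcp H (f i) := by
  classical
  induction s using Finset.induction_on with
  | empty => simpa using projH_zero hcp H
  | insert i s' h ih => rw [Finset.sum_insert h, Finset.sum_insert h,
      projH_add hcp H, ih]

lemma projH_mem (x : A) :
    projH hcp H x ∈ Subring.closure {x : A | ∃ h ∈ H, ∃ a : R, x = δ h a} := by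
  classical
  apply Subring.sum_mem
  intro g hg
  rw [Finset.mem_filter] at hg
  exact Subring.subset_closure ⟨g, hg.2, _, rfl⟩

lemma projH_single (g : G) (a : R) :
    projH hcp H (δ g a) = if g ∈ H then δ g a else 0 := by
  classical
  have hx : δ g a = ∑ k ∈ {g}, δ k (if k = g then pa.e g * a else 0) := by
    simp [← hcp.proj g a]
  have ha : ∀ k, pa.e k * (if k = g then pa.e g * a else 0) = (if k = g then pa.e g * a else 0) := by
    intro k; split
    · subst_vars; rw [← mul_assoc, pa.idem]
    · simp
  rw [projH_eq hcp H (δ g a) {g} _ ha hx]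
  by_cases hg : g ∈ H
  · simp [Finset.filter_singleton, hg, ← hcp.proj g a]
  · simp [Finset.filter_singleton, hg]

lemma projH_base_mul (h : G) (hh : h ∈ H) (c : R) (x : A) :
    projH hcp H (δ h c * x) = δ h c * projH hcp H x := by
  classical
  obtain ⟨s, a, ha, hx⟩ := hcp.span x
  have hec : pa.e h * (pa.e h * c) = pa.e h * c := by rw [← mul_assoc, pa.idem]
  have hmul : ∀ g, δ h c * δ g (a g)
      = δ (h * g) (pa.act h (pa.inv h (pa.e h * c) * a g) * pa.w h g) := by
    intro g
    rw [hcp.proj h c]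
    exact hcp.mul h g _ _ hec (ha g)
  have lhs : projH hcp H (δ h c * x)
      = ∑ g ∈ s, if g ∈ H then δ h c * δ g (a g) else 0 := by
    rw [hx, Finset.mul_sum, projH_sum hcp H]
    refine Finset.sum_congr rfl fun g _ => ?_
    rw [hmul g, projH_single hcp H]
    have : h * g ∈ H ↔ g ∈ H := by
      constructor
      · intro hm; simpa using H.mul_mem (H.inv_mem hh) hm
      · exact fun hm => H.mul_mem hh hm
    rw [← hmul g]
    by_cases hg : g ∈ H
    · rw [if_pos (this.mpr hg), if_pos hg]
    · rw [if_neg (fun hm => hg (this.mp hm)), if_neg hg]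
  rw [lhs, projH_eq hcp H x s a ha hx, Finset.mul_sum, Finset.sum_filter]

/-- every element of the closure has a decomposition supported in `H` -/
lemma exists_dec (x : A) (hx : x ∈ Subring.closure {x : A | ∃ h ∈ H, ∃ a : R, x = δ h a}) :
    ∃ (s : Finset G) (a : G → R), (∀ g, pa.e g * a g = a g) ∧ (∀ g ∈ s, g ∈ H) ∧
      x = ∑ g ∈ s, δ g (a g) := by
  classical
  set S : Set A := {x | ∃ (s : Finset G) (a : G → R), (∀ g, pa.e g * a g = a g) ∧
    (∀ g ∈ s, g ∈ H) ∧ x = ∑ g ∈ s, δ g (a g)} with hS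
  have hzero : (0 : A) ∈ S := ⟨∅, 0, fun g => by simp, by simp, by simp⟩
  have hsingle : ∀ (g : G), g ∈ H → ∀ a : R, δ g a ∈ S := by
    intro g hg a
    refine ⟨{g}, fun k => if k = g then pa.e g * a else 0, ?_, by simpa using hg, ?_⟩
    · intro k
      by_cases hk : k = g
      · subst hk; simp [← mul_assoc, pa.idem]
      · simp [hk]
    · simp [← hcp.proj g a]
  have hadd : ∀ x ∈ S, ∀ y ∈ S, x + y ∈ S := by
    rintro x ⟨s, a, ha, hsH, hx⟩ y ⟨t, b, hb, htH, hy⟩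
    refine ⟨s ∪ t, fun g => (if g ∈ s then a g else 0) + (if g ∈ t then b g else 0), ?_, ?_, ?_⟩
    · intro g
      by_cases h1 : g ∈ s <;> by_cases h2 : g ∈ t <;> simp [h1, h2, mul_add, ha, hb]
    · intro g hg
      rcases Finset.mem_union.mp hg with h' | h'
      exacts [hsH g h', htH g h']
    · have e1 : (∑ g ∈ s ∪ t, δ g ((if g ∈ s then a g else 0) + (if g ∈ t then b g else 0)))
          = (∑ g ∈ s ∪ t, δ g (if g ∈ s then a g else 0))
            + ∑ g ∈ s ∪ t, δ g (if g ∈ t then b g else 0) := by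
        rw [← Finset.sum_add_distrib]
        exact Finset.sum_congr rfl fun g _ => hcp.add g _ _
      have e2 := sum_ite_filter hcp (fun _ => True) (s ∪ t) s Finset.subset_union_left a
      have e3 := sum_ite_filter hcp (fun _ => True) (s ∪ t) t Finset.subset_union_right b
      simp only [Finset.filter_true_of_mem (fun _ _ => trivial)] at e2 e3
      rw [hx, hy, e1, e2, e3]
  have hneg : ∀ x ∈ S, -x ∈ S := by
    rintro x ⟨s, a, ha, hsH, hx⟩
    refine ⟨s, fun g => -a g, fun g => by rw [mul_neg, ha], hsH, ?_⟩
    rw [hx, ← Finset.sum_neg_distrib]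
    exact Finset.sum_congr rfl fun g _ => (delta_neg hcp g (a g)).symm
  have hmul : ∀ x ∈ S, ∀ y ∈ S, x * y ∈ S := by
    rintro x ⟨s, a, ha, hsH, hx⟩ y ⟨t, b, hb, htH, hy⟩
    rw [hx, hy, Finset.sum_mul_sum]
    have hadd' : ∀ x y : A, x ∈ S → y ∈ S → x + y ∈ S := fun x y hx hy => hadd x hx y hy
    refine Finset.sum_induction _ (· ∈ S) hadd' hzero ?_
    intro g hg
    refine Finset.sum_induction _ (· ∈ S) hadd' hzero ?_
    intro k hk
    rw [hcp.mul g k _ _ (ha g) (hb k)]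
    exact hsingle (g * k) (H.mul_mem (hsH g hg) (htH k hk)) _
  have hone : (1 : A) ∈ S := by
    rw [← hcp.one]
    exact hsingle 1 H.one_mem 1
  let Sring : Subring A :=
    { carrier := S
      zero_mem' := hzero
      one_mem' := hone
      add_mem' := fun {x y} hx hy => hadd x hx y hy
      neg_mem' := fun {x} hx => hneg x hx
      mul_mem' := fun {x y} hx hy => hmul x hx y hy }
  have : Subring.closure {x : A | ∃ h ∈ H, ∃ a : R, x = δ h a} ≤ Sring := by
    apply Subring.closure_le.mpr
    rintro x ⟨h, hh, a, rfl⟩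
    exact hsingle h hh a
  exact this hx

lemma projH_fix (x : A) (hx : x ∈ Subring.closure {x : A | ∃ h ∈ H, ∃ a : R, x = δ h a}) :
    projH hcp H x = x := by
  classical
  obtain ⟨s, a, ha, hsH, hxe⟩ := exists_dec hcp H x hx
  rw [projH_eq hcp H x s a ha hxe, Finset.filter_true_of_mem hsH, hxe]

lemma projH_smul (b : A) (hb : b ∈ Subring.closure {x : A | ∃ h ∈ H, ∃ a : R, x = δ h a})
    (x : A) : projH hcp H (b * x) = b * projH hcp H x := by
  classical
  obtain ⟨t, c, hc, htH, hbe⟩ := exists_dec hcp H b hb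
  rw [hbe, Finset.sum_mul, projH_sum hcp H, Finset.sum_mul]
  exact Finset.sum_congr rfl fun h hh => projH_base_mul hcp H h (htH h hh) (c h) x

end CrossedAux


open MulOpposite in
/-- Let `α` be a unital twisted partial action of `G` on `R`
and `H ≤ G`.  If the partial crossed product `R*_{α,w}G` is right artinian,
then so is the subring `R*_{α_H,w_H}H` (the subring generated by the elements
`δ h a` with `h ∈ H`). -/
theorem crossedProduct_subgroup_rightArtinian
    {G R : Type} [Group G] [Ring R]
    (pa : UnitalTwistedPartialAction G R)
    (A : Type) [Ring A] (δ : G → R → A)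
    (hcp : IsCrossedProduct pa A δ) (H : Subgroup G)
    (hart : IsRightArtinianRing A) :
    IsRightArtinianRing
      (Subring.closure {x : A | ∃ h ∈ H, ∃ a : R, x = δ h a}) := by
  classical
  haveI : IsArtinianRing Aᵐᵒᵖ := hart
  show IsArtinianRing _
  set B : Subring A := Subring.closure {x : A | ∃ h ∈ H, ∃ a : R, x = δ h a} with hB
  let ι : (↥B)ᵐᵒᵖ → Aᵐᵒᵖ := fun b => op (↑(unop b) : A)
  let f : Submodule (↥B)ᵐᵒᵖ (↥B)ᵐᵒᵖ → Submodule Aᵐᵒᵖ Aᵐᵒᵖ :=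
    fun I => Submodule.span Aᵐᵒᵖ (ι '' ↑I)
  have key : ∀ (I : Submodule (↥B)ᵐᵒᵖ (↥B)ᵐᵒᵖ) (y : Aᵐᵒᵖ), y ∈ f I →
      ∃ b ∈ I, (↑(unop b) : A) = CrossedAux.projH hcp H (unop y) := by
    intro I y hy
    have main : ∀ a : A,
        ∃ b ∈ I, (↑(unop b) : A) = CrossedAux.projH hcp H (unop y * a) := by
      induction hy using Submodule.span_induction with
      | mem z hz =>
        intro a
        obtain ⟨b₀, hb₀, rfl⟩ := hz
        set pb : ↥B := ⟨CrossedAux.projH hcp H a, CrossedAux.projH_mem hcp H a⟩ with hpb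
        refine ⟨op pb • b₀, I.smul_mem _ hb₀, ?_⟩
        have h1 : CrossedAux.projH hcp H (unop (ι b₀) * a)
            = ↑(unop b₀) * CrossedAux.projH hcp H a := by
          simpa [ι] using CrossedAux.projH_smul hcp H (↑(unop b₀)) (unop b₀).2 a
        rw [h1]
        simp [smul_eq_mul, hpb]
      | zero =>
        intro a
        refine ⟨0, I.zero_mem, ?_⟩
        simp [CrossedAux.projH_zero hcp H]
      | add z₁ z₂ h1 h2 ih1 ih2 =>
        intro a
        obtain ⟨b₁, hb₁, e₁⟩ := ih1 a
        obtain ⟨b₂, hb₂, e₂⟩ := ih2 a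
        refine ⟨b₁ + b₂, I.add_mem hb₁ hb₂, ?_⟩
        have : unop (z₁ + z₂) * a = unop z₁ * a + unop z₂ * a := by
          simp [add_mul]
        rw [this, CrossedAux.projH_add hcp H, ← e₁, ← e₂]
        simp
      | smul c z hz ih =>
        intro a
        obtain ⟨b, hb, e⟩ := ih (unop c * a)
        refine ⟨b, hb, ?_⟩
        rw [e]
        congr 1
        simp [smul_eq_mul, mul_assoc]
    have := main 1
    simpa using this
  have reflect : ∀ I J : Submodule (↥B)ᵐᵒᵖ (↥B)ᵐᵒᵖ, f I ≤ f J → I ≤ J := by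
    intro I J hIJ x hx
    have h1 : ι x ∈ f I := Submodule.subset_span ⟨x, hx, rfl⟩
    obtain ⟨b, hb, he⟩ := key J (ι x) (hIJ h1)
    have h2 : (↑(unop b) : A) = ↑(unop x) := by
      rw [he]
      exact CrossedAux.projH_fix hcp H _ (unop x).2
    have h3 : b = x := unop_injective (Subtype.ext h2)
    rwa [← h3]
  have mono : Monotone f := fun I J h =>
    Submodule.span_mono (Set.image_mono (SetLike.coe_subset_coe.mpr h))
  have smono : StrictMono f := fun I J h =>
    lt_of_le_of_ne (mono h.le) fun he => absurd (reflect J I he.ge) (show I < J from h).not_ge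
  exact smono.wellFoundedLT
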